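/- For every closed term t of λS, either t is a normal form (a value or a stuck term), or there exist a unique redex r and a unique evaluation context F such that t = F[r]. -/
import Mathlib


/-- Terms of the calculus λS: variables, abstractions, applications,
    shift (Sk.t) and reset (⟨t⟩). -/
inductive Tm : Type
  | var : ℕ → Tm
  | lam : ℕ → Tm → Tm
  | app : Tm → Tm → Tm
  | shift : ℕ → Tm → Tm
  | reset : Tm → Tm
deriving DecidableEq

namespace Tm

/-- Values are λ-abstractions. -/
def IsValue : Tm → Prop
  | lam _ _ => True
  | _ => False

/-- Free variables. -/
def fv : Tm → Finset ℕ
  | var x => {x}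
  | lam x t => fv t \ {x}
  | app a b => fv a ∪ fv b
  | shift k t => fv t \ {k}
  | reset t => fv t

def Closed (t : Tm) : Prop := fv t = ∅

/-- Substitution t{v/x} (substituted terms are closed values, so no
    capture can occur). -/
def subst : Tm → ℕ → Tm → Tm
  | var y, x, v => if y = x then v else var y
  | lam y t, x, v => if y = x then lam y t else lam y (subst t x v)
  | app a b, x, v => app (subst a x v) (subst b x v)
  | shift k t, x, v => if k = x then shift k t else shift k (subst t x v)
  | reset t, x, v => reset (subst t x v)

end Tm

/-- (Evaluation) contexts F ::= [] | v F | F t | ⟨F⟩, represented outside-in.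
    Pure contexts E are those with no reset constructor. -/
inductive Ctx : Type
  | hole : Ctx
  | appR : Tm → Ctx → Ctx   -- v F
  | appL : Ctx → Tm → Ctx   -- F t
  | reset : Ctx → Ctx       -- ⟨F⟩
deriving DecidableEq

namespace Ctx

def plug : Ctx → Tm → Tm
  | hole, t => t
  | appR v F, t => Tm.app v (F.plug t)
  | appL F u, t => Tm.app (F.plug t) u
  | reset F, t => Tm.reset (F.plug t)

/-- Well-formedness: in `v F` the term v must be a value. -/
def Wf : Ctx → Prop
  | hole => True
  | appR v F => v.IsValue ∧ F.Wf
  | appL F _ => F.Wf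
  | reset F => F.Wf

/-- Pure contexts contain no reset around the hole. -/
def Pure : Ctx → Prop
  | hole => True
  | appR _ F => F.Pure
  | appL F _ => F.Pure
  | reset _ => False

def fv : Ctx → Finset ℕ
  | hole => ∅
  | appR v F => v.fv ∪ F.fv
  | appL F u => F.fv ∪ u.fv
  | reset F => F.fv

/-- Context composition: (F.comp G)[t] = F[G[t]]. -/
def comp : Ctx → Ctx → Ctx
  | hole, G => G
  | appR v F, G => appR v (F.comp G)
  | appL F u, G => appL (F.comp G) u
  | reset F, G => reset (F.comp G)

end Ctx

/-- A canonical fresh variable not occurring in the finite set s. -/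
def fresh (s : Finset ℕ) : ℕ := s.sup id + 1

/-- The reduction relation →v of λS. -/
inductive Red : Tm → Tm → Prop
  | beta (F : Ctx) (x : ℕ) (t v : Tm) :
      F.Wf → v.IsValue →
      Red (F.plug (Tm.app (Tm.lam x t) v)) (F.plug (t.subst x v))
  | shift (F E : Ctx) (k : ℕ) (t : Tm) :
      F.Wf → E.Wf → E.Pure →
      Red (F.plug (Tm.reset (E.plug (Tm.shift k t))))
          (F.plug (Tm.reset (t.subst k
            (Tm.lam (fresh E.fv) (Tm.reset (E.plug (Tm.var (fresh E.fv))))))))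
  | reset (F : Ctx) (v : Tm) :
      F.Wf → v.IsValue →
      Red (F.plug (Tm.reset v)) (F.plug v)

/-- A term is stuck if it is not a value and admits no reduction step. -/
def Stuck (t : Tm) : Prop := ¬ t.IsValue ∧ ∀ t', ¬ Red t t'

/-- A normal form is a value or a stuck term. -/
def NormalForm (t : Tm) : Prop := t.IsValue ∨ Stuck t

/-- Reflexive-transitive closure of reduction. -/
def Steps : Tm → Tm → Prop := Relation.ReflTransGen Red

/-- Evaluation: t ⇓ t' when t →v* t' and t' is irreducible. -/
def Evals (t t' : Tm) : Prop := Steps t t' ∧ ∀ u, ¬ Red t' u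

/-- Redexes: (λx.t) v, ⟨E[Sk.t]⟩ with E pure, and ⟨v⟩. -/
def IsRedex (r : Tm) : Prop :=
  (∃ x t v, Tm.IsValue v ∧ r = Tm.app (Tm.lam x t) v) ∨
  (∃ E : Ctx, ∃ k t, E.Wf ∧ E.Pure ∧ r = Tm.reset (E.plug (Tm.shift k t))) ∨
  (∃ v, Tm.IsValue v ∧ r = Tm.reset v)

/-- Divergence: an infinite reduction sequence. -/
def Diverges (t : Tm) : Prop := ∃ f : ℕ → Tm, f 0 = t ∧ ∀ n, Red (f n) (f (n + 1))

/-- Ω = (λx.x x)(λx.x x). -/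
def Omega : Tm :=
  Tm.app (Tm.lam 0 (Tm.app (Tm.var 0) (Tm.var 0)))
         (Tm.lam 0 (Tm.app (Tm.var 0) (Tm.var 0)))

/-- Arbitrary one-hole contexts C. -/
inductive GCtx : Type
  | hole : GCtx
  | lam : ℕ → GCtx → GCtx
  | appL : GCtx → Tm → GCtx
  | appR : Tm → GCtx → GCtx
  | shift : ℕ → GCtx → GCtx
  | reset : GCtx → GCtx

def GCtx.plug : GCtx → Tm → Tm
  | hole, t => t
  | lam x C, t => Tm.lam x (C.plug t)
  | appL C u, t => Tm.app (C.plug t) u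
  | appR u C, t => Tm.app u (C.plug t)
  | shift k C, t => Tm.shift k (C.plug t)
  | reset C, t => Tm.reset (C.plug t)

/-- Contextual equivalence for the relaxed semantics. -/
def CtxEquiv (t0 t1 : Tm) : Prop :=
  ∀ C : GCtx, (C.plug t0).Closed → (C.plug t1).Closed →
    ((∃ v, v.IsValue ∧ Evals (C.plug t0) v) ↔ (∃ v, v.IsValue ∧ Evals (C.plug t1) v)) ∧
    ((∃ s, Stuck s ∧ Evals (C.plug t0) s) ↔ (∃ s, Stuck s ∧ Evals (C.plug t1) s))

/-- Contextual equivalence for the original (top-level reset) semantics. -/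
def CtxEquivP (t0 t1 : Tm) : Prop :=
  ∀ C : GCtx, (Tm.reset (C.plug t0)).Closed → (Tm.reset (C.plug t1)).Closed →
    ((∃ v, v.IsValue ∧ Evals (Tm.reset (C.plug t0)) v) ↔
     (∃ v, v.IsValue ∧ Evals (Tm.reset (C.plug t1)) v))

/-- The term-generating closure of a relation R on closed terms. -/
inductive TmClo (R : Tm → Tm → Prop) : Tm → Tm → Prop
  | base {t t'} : R t t' → TmClo R t t'
  | var (x : ℕ) : TmClo R (Tm.var x) (Tm.var x)
  | lam {t t'} (x : ℕ) : TmClo R t t' → TmClo R (Tm.lam x t) (Tm.lam x t')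
  | app {a a' b b'} : TmClo R a a' → TmClo R b b' →
      TmClo R (Tm.app a b) (Tm.app a' b')
  | shift {t t'} (k : ℕ) : TmClo R t t' → TmClo R (Tm.shift k t) (Tm.shift k t')
  | reset {t t'} : TmClo R t t' → TmClo R (Tm.reset t) (Tm.reset t')
section Aux

def Decomp (t : Tm) : Prop :=
  ∃! p : Ctx × Tm, p.1.Wf ∧ IsRedex p.2 ∧ t = p.1.plug p.2

lemma value_plug {F : Ctx} {t : Tm} (h : (F.plug t).IsValue) :
    F = Ctx.hole ∧ t.IsValue := by
  cases F <;> simp [Ctx.plug, Tm.IsValue] at h ⊢ <;> exact h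

lemma redex_not_value {r : Tm} (h : IsRedex r) : ¬ r.IsValue := by
  rcases h with ⟨x, t, v, hv, rfl⟩ | ⟨E, k, t, _, _, rfl⟩ | ⟨v, _, rfl⟩ <;>
    simp [Tm.IsValue]

lemma no_decomp_value {v : Tm} {F : Ctx} {r : Tm} (hv : v.IsValue)
    (hr : IsRedex r) (he : v = F.plug r) : False := by
  obtain ⟨rfl, h2⟩ := value_plug (he ▸ hv)
  exact redex_not_value hr h2

lemma shiftplug_not_value {E : Ctx} {k : ℕ} {s : Tm} :
    ¬ (E.plug (Tm.shift k s)).IsValue := by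
  intro h
  obtain ⟨rfl, h2⟩ := value_plug h
  simp [Tm.IsValue] at h2

lemma no_decomp_shift : ∀ (E : Ctx), E.Wf → E.Pure → ∀ (k : ℕ) (s : Tm)
    (F : Ctx) (r : Tm), F.Wf → IsRedex r →
    E.plug (Tm.shift k s) = F.plug r → False := by
  intro E
  induction E with
  | hole =>
    intro _ _ k s F r hF hr he
    cases F with
    | hole =>
      simp only [Ctx.plug] at he
      rcases hr with ⟨x, t, v, _, h⟩ | ⟨E', k', t, _, _, h⟩ | ⟨v, _, h⟩ <;>
        rw [← he] at h <;> cases h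
    | appR v F' => cases he
    | appL F' u => cases he
    | reset F' => cases he
  | appR v E' ih =>
    intro hw hp k s F r hF hr he
    obtain ⟨hv, hw'⟩ := hw
    cases F with
    | hole =>
      simp only [Ctx.plug] at he
      rcases hr with ⟨x, t, v', hv', h⟩ | ⟨E'', k', t, _, _, h⟩ | ⟨v', _, h⟩ <;>
        rw [← he] at h
      · injection h with h1 h2
        exact shiftplug_not_value (h2 ▸ hv')
      · cases h
      · cases h
    | appR v' F' =>
      injection he with h1 h2
      exact ih hw' hp k s F' r hF.2 hr h2
    | appL F' u =>
      injection he with h1 h2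
      exact no_decomp_value hv hr h1
    | reset F' => cases he
  | appL E' u ih =>
    intro hw hp k s F r hF hr he
    cases F with
    | hole =>
      simp only [Ctx.plug] at he
      rcases hr with ⟨x, t, v', hv', h⟩ | ⟨E'', k', t, _, _, h⟩ | ⟨v', _, h⟩ <;>
        rw [← he] at h
      · injection h with h1 h2
        exact shiftplug_not_value (h1 ▸ (by trivial : (Tm.lam x t).IsValue))
      · cases h
      · cases h
    | appR v' F' =>
      injection he with h1 h2
      exact shiftplug_not_value (h1 ▸ hF.1)
    | appL F' u' =>
      injection he with h1 h2
      exact ih hw hp k s F' r hF hr h1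
    | reset F' => cases he
  | reset E' ih =>
    intro _ hp
    cases hp

lemma isValue_lam {t : Tm} (h : t.IsValue) : ∃ x s, t = Tm.lam x s := by
  cases t <;> first | exact ⟨_, _, rfl⟩ | simp [Tm.IsValue] at h

lemma trichotomy : ∀ t : Tm, t.Closed →
    t.IsValue ∨ (∃ E : Ctx, ∃ k s, E.Wf ∧ E.Pure ∧ t = E.plug (Tm.shift k s)) ∨
      Decomp t := by
  intro t
  induction t with
  | var x => intro ht; simp [Tm.Closed, Tm.fv] at ht
  | lam x s => intro _; left; trivial
  | shift k s =>
    intro _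
    right; left
    exact ⟨Ctx.hole, k, s, trivial, trivial, rfl⟩
  | app a b iha ihb =>
    intro ht
    have hab : a.Closed ∧ b.Closed := by
      simpa [Tm.Closed, Tm.fv, Finset.union_eq_empty] using ht
    rcases iha hab.1 with hav | ⟨E, k, s, hEw, hEp, rfl⟩ | ⟨⟨F, r⟩, ⟨hFw, hrr, hae⟩, huniq⟩
    · rcases ihb hab.2 with hbv | ⟨E, k, s, hEw, hEp, rfl⟩ | ⟨⟨F, r⟩, ⟨hFw, hrr, hbe⟩, huniq⟩
      · -- both values: redex at top
        obtain ⟨x, s, rfl⟩ := isValue_lam hav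
        right; right
        refine ⟨(Ctx.hole, Tm.app (Tm.lam x s) b),
          ⟨trivial, Or.inl ⟨x, s, b, hbv, rfl⟩, rfl⟩, ?_⟩
        rintro ⟨F, r⟩ ⟨hFw, hrr, he⟩
        cases F with
        | hole => simpa [Ctx.plug] using he.symm
        | appR v F' =>
          injection he with h1 h2
          exact absurd h2 (fun h => no_decomp_value hbv hrr h)
        | appL F' u =>
          injection he with h1 h2
          exact absurd h1 (fun h => no_decomp_value (by trivial) hrr h)
        | reset F' => cases he
      · -- b stuck form
        right; left
        exact ⟨Ctx.appR a E, k, s, ⟨hav, hEw⟩, hEp, rfl⟩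
      · -- b decomposes
        right; right
        refine ⟨(Ctx.appR a F, r), ⟨⟨hav, hFw⟩, hrr, by rw [hbe]; rfl⟩, ?_⟩
        rintro ⟨F', r'⟩ ⟨hF'w, hrr', he⟩
        cases F' with
        | hole =>
          simp only [Ctx.plug] at he
          rcases hrr' with ⟨x, t0, v, hv, h⟩ | ⟨E'', k', t0, _, _, h⟩ | ⟨v, _, h⟩ <;>
            rw [← he] at h
          · injection h with h1 h2
            exact absurd hbe (fun hh => no_decomp_value (h2 ▸ hv) hrr hh)
          · cases h
          · cases h
        | appR v F'' =>
          injection he with h1 h2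
          have := huniq (F'', r') ⟨hF'w.2, hrr', h2⟩
          obtain ⟨h3, h4⟩ := Prod.mk.injEq .. ▸ this
          simp [h3, h4, h1]
        | appL F'' u =>
          injection he with h1 h2
          exact absurd h1 (fun h => no_decomp_value hav hrr' h)
        | reset F'' => cases he
    · -- a stuck form
      right; left
      exact ⟨Ctx.appL E b, k, s, hEw, hEp, rfl⟩
    · -- a decomposes
      right; right
      refine ⟨(Ctx.appL F b, r), ⟨hFw, hrr, by rw [hae]; rfl⟩, ?_⟩
      rintro ⟨F', r'⟩ ⟨hF'w, hrr', he⟩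
      cases F' with
      | hole =>
        simp only [Ctx.plug] at he
        rcases hrr' with ⟨x, t0, v, hv, h⟩ | ⟨E'', k', t0, _, _, h⟩ | ⟨v, _, h⟩ <;>
          rw [← he] at h
        · injection h with h1 h2
          exact absurd hae (fun hh => no_decomp_value (h1 ▸ (by trivial : (Tm.lam x t0).IsValue)) hrr hh)
        · cases h
        · cases h
      | appR v F'' =>
        injection he with h1 h2
        exact absurd hae (fun hh => no_decomp_value (h1 ▸ hF'w.1) hrr hh)
      | appL F'' u =>
        injection he with h1 h2
        have := huniq (F'', r') ⟨hF'w, hrr', h1⟩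
        obtain ⟨h3, h4⟩ := Prod.mk.injEq .. ▸ this
        simp [h3, h4, h2]
      | reset F'' => cases he
  | reset u ih =>
    intro ht
    have hu : u.Closed := by simpa [Tm.Closed, Tm.fv] using ht
    rcases ih hu with huv | ⟨E, k, s, hEw, hEp, rfl⟩ | ⟨⟨F, r⟩, ⟨hFw, hrr, hue⟩, huniq⟩
    · right; right
      refine ⟨(Ctx.hole, Tm.reset u),
        ⟨trivial, Or.inr (Or.inr ⟨u, huv, rfl⟩), rfl⟩, ?_⟩
      rintro ⟨F, r⟩ ⟨hFw, hrr, he⟩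
      cases F with
      | hole => simpa [Ctx.plug] using he.symm
      | appR v F' => cases he
      | appL F' u' => cases he
      | reset F' =>
        injection he with h1
        exact absurd h1 (fun h => no_decomp_value huv hrr h)
    · right; right
      refine ⟨(Ctx.hole, Tm.reset (E.plug (Tm.shift k s))),
        ⟨trivial, Or.inr (Or.inl ⟨E, k, s, hEw, hEp, rfl⟩), rfl⟩, ?_⟩
      rintro ⟨F, r⟩ ⟨hFw, hrr, he⟩
      cases F with
      | hole => simpa [Ctx.plug] using he.symm
      | appR v F' => cases he
      | appL F' u' => cases he
      | reset F' =>
        injection he with h1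
        exact absurd (no_decomp_shift E hEw hEp k s F' r hFw hrr h1) id
    · right; right
      refine ⟨(Ctx.reset F, r), ⟨hFw, hrr, by rw [hue]; rfl⟩, ?_⟩
      rintro ⟨F', r'⟩ ⟨hF'w, hrr', he⟩
      cases F' with
      | hole =>
        simp only [Ctx.plug] at he
        rcases hrr' with ⟨x, t0, v, hv, h⟩ | ⟨E'', k', t0, hE''w, hE''p, h⟩ | ⟨v, hv, h⟩ <;>
          rw [← he] at h
        · cases h
        · injection h with h1
          exact absurd (no_decomp_shift E'' hE''w hE''p k' t0 F r hFw hrr (h1 ▸ hue)) id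
        · injection h with h1
          exact absurd hue (fun hh => no_decomp_value (h1 ▸ hv) hrr hh)
      | appR v F'' => cases he
      | appL F'' u' => cases he
      | reset F'' =>
        injection he with h1
        have := huniq (F'', r') ⟨hF'w, hrr', h1⟩
        obtain ⟨h3, h4⟩ := Prod.mk.injEq .. ▸ this
        simp [h3, h4]

lemma red_decomp {t t' : Tm} (h : Red t t') :
    ∃ (F : Ctx) (r : Tm), F.Wf ∧ IsRedex r ∧ t = F.plug r := by
  cases h with
  | beta F x s v hF hv => exact ⟨F, _, hF, Or.inl ⟨x, s, v, hv, rfl⟩, rfl⟩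
  | shift F E k s hF hE hP => exact ⟨F, _, hF, Or.inr (Or.inl ⟨E, k, s, hE, hP, rfl⟩), rfl⟩
  | reset F v hF hv => exact ⟨F, _, hF, Or.inr (Or.inr ⟨v, hv, rfl⟩), rfl⟩

end Aux

/-- unique decomposition of closed terms. -/
theorem unique_decomposition (t : Tm) (ht : t.Closed) :
    NormalForm t ∨
      ∃! p : Ctx × Tm, p.1.Wf ∧ IsRedex p.2 ∧ t = p.1.plug p.2 := by
  rcases trichotomy t ht with hv | ⟨E, k, s, hEw, hEp, rfl⟩ | hd
  · exact Or.inl (Or.inl hv)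
  · refine Or.inl (Or.inr ⟨shiftplug_not_value, fun t' hr => ?_⟩)
    obtain ⟨F, r, hF, hrr, he⟩ := red_decomp hr
    exact no_decomp_shift E hEw hEp k s F r hF hrr he
  · exact Or.inr hd
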